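/- Let V and W be left H-modules, and define τ_{V,W} : Hom_k(H, V⊗W) → Hom_k(H, W⊗V) by τ_{V,W}(φ)(h) = (id_W ⊗ (h⁽²⁾·)) (σ_{V,W}(φ(h⁽¹⁾))); explicitly, if φ(h⁽¹⁾) = Σ v ⊗ w then τ_{V,W}(φ)(h) = Σ w ⊗ h⁽²⁾·v. Then for every φ ∈ Hom_k(H, V⊗W), (τ_{W,V} ∘ τ_{V,W})(φ) = (h ↦ h⁽²⁾·φ(h⁽¹⁾)), where H acts diagonally on V ⊗ W. -/
import Mathlib


/-!
# Statement 18

`k` a field, `H` a Hopf algebra over `k`, `V, W` left `H`-modules.  Define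
`τ_{V,W} : Hom_k(H, V ⊗ W) → Hom_k(H, W ⊗ V)` by
`τ_{V,W}(φ)(h) = (id_W ⊗ (h⁽²⁾·)) (σ_{V,W} (φ(h⁽¹⁾)))`, i.e. if `φ(h⁽¹⁾) = Σ v ⊗ w` then
`τ_{V,W}(φ)(h) = Σ w ⊗ h⁽²⁾·v`.  Then for every `φ`,
`(τ_{W,V} ∘ τ_{V,W})(φ) = (h ↦ h⁽²⁾ · φ(h⁽¹⁾))`, with the diagonal `H`-action on `V ⊗ W`.
-/

open TensorProduct

noncomputable section

variable (k : Type) [Field k]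

/-- The curried action of a `k`-algebra `R` on a module `V`, as a `k`-bilinear map. -/
def csmul (R : Type) [Ring R] [Algebra k R] (V : Type) [AddCommGroup V] [Module k V]
    [Module R V] [IsScalarTower k R V] [SMulCommClass k R V] : R →ₗ[k] V →ₗ[k] V where
  toFun r :=
    { toFun := fun v => r • v
      map_add' := smul_add r
      map_smul' := fun c v => (smul_comm c r v).symm }
  map_add' r r' := LinearMap.ext fun v => add_smul r r' v
  map_smul' c r := LinearMap.ext fun v => smul_assoc c r v

variable (H : Type) [Ring H] [HopfAlgebra k H]
variable (V W : Type)
  [AddCommGroup V] [Module k V] [Module H V] [IsScalarTower k H V] [SMulCommClass k H V]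
  [AddCommGroup W] [Module k W] [Module H W] [IsScalarTower k H W] [SMulCommClass k H W]

/-- `τ_{V,W}(φ)(h) = Σ w ⊗ h⁽²⁾ · v` where `φ(h⁽¹⁾) = Σ v ⊗ w`. -/
def tau (φ : H →ₗ[k] V ⊗[k] W) : H →ₗ[k] W ⊗[k] V :=
  (LinearMap.lTensor W
      ((TensorProduct.lift (csmul k H V)) ∘ₗ (TensorProduct.comm k V H).toLinearMap)) ∘ₗ
    (TensorProduct.assoc k W V H).toLinearMap ∘ₗ
    (LinearMap.rTensor H ((TensorProduct.comm k V W).toLinearMap ∘ₗ φ)) ∘ₗ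
    (Coalgebra.comul (R := k))

/-- The diagonal action `H ⊗ (V ⊗ W) →ₗ V ⊗ W`, `h ⊗ (v ⊗ w) ↦ h⁽¹⁾ v ⊗ h⁽²⁾ w`. -/
def diagAct : H ⊗[k] (V ⊗[k] W) →ₗ[k] V ⊗[k] W :=
  (TensorProduct.map (TensorProduct.lift (csmul k H V)) (TensorProduct.lift (csmul k H W))) ∘ₗ
    (TensorProduct.tensorTensorTensorComm k H H V W).toLinearMap ∘ₗ
    (LinearMap.rTensor (V ⊗[k] W) (Coalgebra.comul (R := k)))

/-- Pointwise core computation: both double-twist and diagonal-action cores agree. -/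
lemma tau_core (x : V ⊗[k] W) (b c : H) :
    (LinearMap.lTensor V
        ((TensorProduct.lift (csmul k H W)) ∘ₗ (TensorProduct.comm k W H).toLinearMap))
      ((TensorProduct.assoc k V W H)
        (((TensorProduct.comm k W V)
          ((LinearMap.lTensor W
              ((TensorProduct.lift (csmul k H V)) ∘ₗ (TensorProduct.comm k V H).toLinearMap))
            ((TensorProduct.assoc k W V H) (((TensorProduct.comm k V W) x) ⊗ₜ[k] b)))) ⊗ₜ[k] c))
    = (TensorProduct.map (TensorProduct.lift (csmul k H V)) (TensorProduct.lift (csmul k H W)))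
        ((TensorProduct.tensorTensorTensorComm k H H V W) ((b ⊗ₜ[k] c) ⊗ₜ[k] x)) := by
  induction x using TensorProduct.induction_on with
  | zero => simp
  | tmul v w => simp [csmul]
  | add x y hx hy => simp [add_tmul, tmul_add, hx, hy]

theorem stmt18 (φ : H →ₗ[k] V ⊗[k] W) :
    tau k H W V (tau k H V W φ) =
      (diagAct k H V W) ∘ₗ (TensorProduct.comm k (V ⊗[k] W) H).toLinearMap ∘ₗ
        (LinearMap.rTensor H φ) ∘ₗ (Coalgebra.comul (R := k)) := by
  set Δ : H →ₗ[k] H ⊗[k] H := Coalgebra.comul (R := k) with hΔ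
  -- the comul-free core of the inner tau
  set B : H ⊗[k] H →ₗ[k] W ⊗[k] V :=
    (LinearMap.lTensor W
        ((TensorProduct.lift (csmul k H V)) ∘ₗ (TensorProduct.comm k V H).toLinearMap)) ∘ₗ
      (TensorProduct.assoc k W V H).toLinearMap ∘ₗ
      (LinearMap.rTensor H ((TensorProduct.comm k V W).toLinearMap ∘ₗ φ)) with hB
  -- the comul-free core of the double tau
  set C : (H ⊗[k] H) ⊗[k] H →ₗ[k] V ⊗[k] W :=
    (LinearMap.lTensor V
        ((TensorProduct.lift (csmul k H W)) ∘ₗ (TensorProduct.comm k W H).toLinearMap)) ∘ₗ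
      (TensorProduct.assoc k V W H).toLinearMap ∘ₗ
      (LinearMap.rTensor H ((TensorProduct.comm k W V).toLinearMap ∘ₗ B)) with hC
  -- the comul-free core of the right-hand side
  set D : H ⊗[k] (H ⊗[k] H) →ₗ[k] V ⊗[k] W :=
    (TensorProduct.map (TensorProduct.lift (csmul k H V)) (TensorProduct.lift (csmul k H W))) ∘ₗ
      (TensorProduct.tensorTensorTensorComm k H H V W).toLinearMap ∘ₗ
      (LinearMap.lTensor (H ⊗[k] H) φ) ∘ₗ
      (TensorProduct.comm k H (H ⊗[k] H)).toLinearMap with hD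
  have hL : tau k H W V (tau k H V W φ) = C ∘ₗ (LinearMap.rTensor H Δ) ∘ₗ Δ := by
    have key : LinearMap.rTensor H ((TensorProduct.comm k W V).toLinearMap ∘ₗ tau k H V W φ)
        = LinearMap.rTensor H ((TensorProduct.comm k W V).toLinearMap ∘ₗ B)
            ∘ₗ LinearMap.rTensor H Δ := by
      rw [← LinearMap.rTensor_comp]; rfl
    show (LinearMap.lTensor V
        ((TensorProduct.lift (csmul k H W)) ∘ₗ (TensorProduct.comm k W H).toLinearMap)) ∘ₗ
      (TensorProduct.assoc k V W H).toLinearMap ∘ₗ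
      (LinearMap.rTensor H ((TensorProduct.comm k W V).toLinearMap ∘ₗ tau k H V W φ)) ∘ₗ Δ = _
    rw [key]; rfl
  have hR : (diagAct k H V W) ∘ₗ (TensorProduct.comm k (V ⊗[k] W) H).toLinearMap ∘ₗ
        (LinearMap.rTensor H φ) ∘ₗ Δ = D ∘ₗ (LinearMap.lTensor H Δ) ∘ₗ Δ := by
    have nat : (LinearMap.rTensor (V ⊗[k] W) Δ) ∘ₗ (TensorProduct.comm k (V ⊗[k] W) H).toLinearMap
          ∘ₗ (LinearMap.rTensor H φ)
        = (LinearMap.lTensor (H ⊗[k] H) φ) ∘ₗ (TensorProduct.comm k H (H ⊗[k] H)).toLinearMap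
          ∘ₗ (LinearMap.lTensor H Δ) := by
      ext x y
      simp
    show ((TensorProduct.map (TensorProduct.lift (csmul k H V))
        (TensorProduct.lift (csmul k H W))) ∘ₗ
      (TensorProduct.tensorTensorTensorComm k H H V W).toLinearMap) ∘ₗ
      ((LinearMap.rTensor (V ⊗[k] W) Δ) ∘ₗ (TensorProduct.comm k (V ⊗[k] W) H).toLinearMap ∘ₗ
        (LinearMap.rTensor H φ)) ∘ₗ Δ = _
    rw [nat]; rfl
  have hCD : C = D ∘ₗ (TensorProduct.assoc k H H H).toLinearMap := by
    ext a b c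
    simp only [hC, hB, hD, LinearMap.compr₂_apply, TensorProduct.mk_apply,
      LinearMap.coe_comp, Function.comp_apply, LinearEquiv.coe_coe,
      TensorProduct.assoc_tmul, LinearMap.rTensor_tmul, LinearMap.lTensor_tmul,
      TensorProduct.comm_tmul]
    exact tau_core k H V W (φ a) b c
  rw [hL, hR, hCD, LinearMap.comp_assoc]
  congr 1
  have := Coalgebra.coassoc (R := k) (A := H)
  rw [← LinearMap.comp_assoc]
  exact this.symm ▸ rfl

end
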